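/- arXiv:2202.03412 — 4 statements merged into one kernel-verified Lean document; each statement's English description precedes it below -/
import Mathlib

section
/- With the same setup as the N=1 non-Abelian K^(1) map, u = (1-y)⁻¹(x-y)x(x-y)⁻¹(1-y) and v = (1-x)⁻¹(y-x)y(y-x)⁻¹(1-x), the second compatibility condition (1-u)⁻¹·u·(1-y)⁻¹·y = (1-v)⁻¹·v·(1-x)⁻¹·x holds, provided all inverses exist. -/
-- conjugation helper: for nonzero a, c:  (c⁻¹ * a * w * a⁻¹ * c) with 1 - that
lemma conj_one_sub {D : Type*} [DivisionRing D] (c a w : D) (hc : c ≠ 0) (ha : a ≠ 0) :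
    1 - c⁻¹ * a * w * a⁻¹ * c = c⁻¹ * a * (1 - w) * a⁻¹ * c := by
  have : c⁻¹ * a * (1 - w) * a⁻¹ * c
      = c⁻¹ * (a * a⁻¹) * c - c⁻¹ * a * w * a⁻¹ * c := by
    noncomm_ring
  rw [this, mul_inv_cancel₀ ha, mul_one, inv_mul_cancel₀ hc]

lemma resolvent_cross {D : Type*} [DivisionRing D] (x y : D) (hx : x ≠ 0) (hy : y ≠ 0) :
    x * (x - y)⁻¹ * y = y * (x - y)⁻¹ * x := by
  have h1 : y⁻¹ * (x - y) * x⁻¹ = y⁻¹ - x⁻¹ := by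
    rw [mul_sub, inv_mul_cancel₀ hy, sub_mul, one_mul, mul_assoc, mul_inv_cancel₀ hx, mul_one]
  have h2 : x⁻¹ * (x - y) * y⁻¹ = y⁻¹ - x⁻¹ := by
    rw [mul_sub, inv_mul_cancel₀ hx, sub_mul, one_mul, mul_assoc, mul_inv_cancel₀ hy, mul_one]
  have := congrArg (·⁻¹) (h1.trans h2.symm)
  simpa [mul_inv_rev, mul_assoc] using this

lemma resolvent_id {D : Type*} [DivisionRing D] (p q : D) (hp : p ≠ 0) (hq : q ≠ 0) :
    q⁻¹ * (q - p) * p⁻¹ = p⁻¹ - q⁻¹ := by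
  rw [mul_sub, inv_mul_cancel₀ hq, sub_mul, one_mul, mul_assoc, mul_inv_cancel₀ hp, mul_one]

theorem stmt_2 {D : Type*} [DivisionRing D] (x y u v : D)
    (hx : x ≠ 0) (hy : y ≠ 0) (hxy : x ≠ y) (hx1 : x ≠ 1) (hy1 : y ≠ 1)
    (hu : u = (1 - y)⁻¹ * (x - y) * x * (x - y)⁻¹ * (1 - y))
    (hv : v = (1 - x)⁻¹ * (y - x) * y * (y - x)⁻¹ * (1 - x))
    (h1u : 1 - u ≠ 0) (h1v : 1 - v ≠ 0) :
    (1 - u)⁻¹ * u * (1 - y)⁻¹ * y = (1 - v)⁻¹ * v * (1 - x)⁻¹ * x := by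
  have hq : (1:D) - y ≠ 0 := sub_ne_zero_of_ne (Ne.symm hy1)
  have hp : (1:D) - x ≠ 0 := sub_ne_zero_of_ne (Ne.symm hx1)
  have ha : x - y ≠ 0 := sub_ne_zero_of_ne hxy
  have hb : y - x ≠ 0 := sub_ne_zero_of_ne (Ne.symm hxy)
  have h1u' : 1 - u = (1-y)⁻¹ * (x-y) * (1 - x) * (x-y)⁻¹ * (1-y) := by
    rw [hu]; exact conj_one_sub _ _ _ hq ha
  have h1v' : 1 - v = (1-x)⁻¹ * (y-x) * (1 - y) * (y-x)⁻¹ * (1-x) := by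
    rw [hv]; exact conj_one_sub _ _ _ hp hb
  -- LHS
  have hLinv : (1 - u)⁻¹ = (1-y)⁻¹ * (x-y) * (1-x)⁻¹ * (x-y)⁻¹ * (1-y) := by
    rw [h1u']
    simp [mul_inv_rev, mul_assoc]
  have hRinv : (1 - v)⁻¹ = (1-x)⁻¹ * (y-x) * (1-y)⁻¹ * (y-x)⁻¹ * (1-x) := by
    rw [h1v']
    simp [mul_inv_rev, mul_assoc]
  have hL : (1 - u)⁻¹ * u * (1 - y)⁻¹ * y
      = (1-y)⁻¹ * (x-y) * (1-x)⁻¹ * (x * (x-y)⁻¹ * y) := by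
    rw [hLinv, hu]
    simp [mul_assoc, mul_inv_cancel_left₀ hq, inv_mul_cancel_left₀ hq, mul_inv_cancel_left₀ ha, inv_mul_cancel_left₀ ha]
  have hR : (1 - v)⁻¹ * v * (1 - x)⁻¹ * x
      = (1-x)⁻¹ * (y-x) * (1-y)⁻¹ * (y * (y-x)⁻¹ * x) := by
    rw [hRinv, hv]
    simp [mul_assoc, mul_inv_cancel_left₀ hp, inv_mul_cancel_left₀ hp, mul_inv_cancel_left₀ hb, inv_mul_cancel_left₀ hb]
  rw [hL, hR]
  have e1 : (1-y)⁻¹ * (x-y) * (1-x)⁻¹ = (1-x)⁻¹ - (1-y)⁻¹ := by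
    have := resolvent_id (1-x) (1-y) hp hq
    simpa using this
  have e2 : (1-x)⁻¹ * (y-x) * (1-y)⁻¹ = (1-y)⁻¹ - (1-x)⁻¹ := by
    have := resolvent_id (1-y) (1-x) hq hp
    simpa using this
  have e3 : y * (y-x)⁻¹ * x = -(y * (x-y)⁻¹ * x) := by
    rw [(neg_sub x y).symm, inv_neg]
    noncomm_ring
  rw [e1, e2, e3, resolvent_cross x y hx hy]
  noncomm_ring
end

section
/- Let D be a division ring and let X^b, X^c, Y^b, Y^c ∈ D (playing the roles of X^{i,b}, X^{i,c}, X^{i-1,b}, X^{i-1,c}). Define Γ_{bc} = (X^b - X^c)⁻¹(1 - X^c) - Y^b·(Y^b - Y^c)⁻¹·(1 - Y^c), and define Γ_{cb} by interchanging b and c. Then Γ_{bc} + Γ_{cb} = 0, provided X^b ≠ X^c and Y^b ≠ Y^c. -/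
theorem stmt_5 {D : Type*} [DivisionRing D] (Xb Xc Yb Yc : D)
    (hX : Xb ≠ Xc) (hY : Yb ≠ Yc) :
    ((Xb - Xc)⁻¹ * (1 - Xc) - Yb * (Yb - Yc)⁻¹ * (1 - Yc))
      + ((Xc - Xb)⁻¹ * (1 - Xb) - Yc * (Yc - Yb)⁻¹ * (1 - Yb)) = 0 := by
  have hX' : Xb - Xc ≠ 0 := sub_ne_zero.mpr hX
  have hY' : Yb - Yc ≠ 0 := sub_ne_zero.mpr hY
  set a := (Xb - Xc)⁻¹ with ha
  set b := (Yb - Yc)⁻¹ with hb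
  have hXinv : (Xc - Xb)⁻¹ = -a := by rw [ha, ← neg_sub, inv_neg]
  have hYinv : (Yc - Yb)⁻¹ = -b := by rw [hb, ← neg_sub, inv_neg]
  have ha1 : a * (Xb - Xc) = 1 := inv_mul_cancel₀ hX'
  have hb1 : (Yb - Yc) * b = 1 := mul_inv_cancel₀ hY'
  have hb2 : b * (Yb - Yc) = 1 := inv_mul_cancel₀ hY'
  -- X-part equals 1
  have h1 : a * (1 - Xc) + (Xc - Xb)⁻¹ * (1 - Xb) = 1 := by
    rw [hXinv]
    calc a * (1 - Xc) + (-a) * (1 - Xb) = a * (Xb - Xc) := by noncomm_ring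
    _ = 1 := ha1
  -- Y-part equals 1
  have e1 : b * Yc = b * Yb - 1 := by
    have h2' : b * Yb - b * Yc = 1 := by rw [← mul_sub]; exact hb2
    have := sub_eq_iff_eq_add.mp h2'
    rw [this]; abel
  have e2 : Yb * (b * Yc) - Yc * (b * Yb) = 0 := by
    rw [e1]
    calc Yb * (b * Yb - 1) - Yc * (b * Yb)
        = (Yb - Yc) * b * Yb - Yb := by noncomm_ring
      _ = 0 := by rw [hb1]; noncomm_ring
  have h2 : Yb * b * (1 - Yc) + Yc * (Yc - Yb)⁻¹ * (1 - Yb) = 1 := by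
    rw [hYinv]
    have expand : Yb * b * (1 - Yc) + Yc * (-b) * (1 - Yb)
        = (Yb - Yc) * b - (Yb * (b * Yc) - Yc * (b * Yb)) := by noncomm_ring
    rw [expand, e2, hb1]; abel
  calc (a * (1 - Xc) - Yb * b * (1 - Yc)) + ((Xc - Xb)⁻¹ * (1 - Xb) - Yc * (Yc - Yb)⁻¹ * (1 - Yb))
      = (a * (1 - Xc) + (Xc - Xb)⁻¹ * (1 - Xb)) - (Yb * b * (1 - Yc) + Yc * (Yc - Yb)⁻¹ * (1 - Yb)) := by abel
    _ = 0 := by rw [h1, h2]; exact sub_self 1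
end

section
/- Let D be a division ring and X^a, X^b, X^c, Y^a, Y^b, Y^c ∈ D. Define Δ_{bc} = (X^b - X^c)⁻¹(X^a - X^c)·Y^a - Y^b·(Y^b - Y^c)⁻¹·(Y^a - Y^c), and Δ_{cb} by interchanging b and c. Then Δ_{bc} + Δ_{cb} = 0, provided X^b ≠ X^c and Y^b ≠ Y^c. -/
theorem stmt_6 {D : Type*} [DivisionRing D] (Xa Xb Xc Ya Yb Yc : D)
    (hX : Xb ≠ Xc) (hY : Yb ≠ Yc) :
    ((Xb - Xc)⁻¹ * (Xa - Xc) * Ya - Yb * (Yb - Yc)⁻¹ * (Ya - Yc))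
      + ((Xc - Xb)⁻¹ * (Xa - Xb) * Ya - Yc * (Yc - Yb)⁻¹ * (Ya - Yb)) = 0 := by
  have hX' : Xb - Xc ≠ 0 := sub_ne_zero_of_ne hX
  have hY' : Yb - Yc ≠ 0 := sub_ne_zero_of_ne hY
  rw [show (Xc - Xb)⁻¹ = -(Xb - Xc)⁻¹ by rw [← neg_sub, inv_neg],
      show (Yc - Yb)⁻¹ = -(Yb - Yc)⁻¹ by rw [← neg_sub, inv_neg]]
  set u := (Xb - Xc)⁻¹ with hu
  set v := (Yb - Yc)⁻¹ with hv
  have h1 : u * Xb - u * Xc = 1 := by rw [← mul_sub]; exact inv_mul_cancel₀ hX'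
  have h2 : v * Yb - v * Yc = 1 := by rw [← mul_sub]; exact inv_mul_cancel₀ hY'
  have h3 : Yb * v - Yc * v = 1 := by rw [← sub_mul]; exact mul_inv_cancel₀ hY'
  have h2' : v * Yb = 1 + v * Yc := by rw [eq_add_of_sub_eq h2]
  have h3' : Yb * v = 1 + Yc * v := by rw [eq_add_of_sub_eq h3]
  have h4 : Yb * v * Yc = Yc * v * Yb := by
    rw [h3', mul_assoc Yc v Yb, h2']; noncomm_ring
  have expand : ((u * (Xa - Xc) * Ya - Yb * v * (Ya - Yc))
      + (-u * (Xa - Xb) * Ya - Yc * -v * (Ya - Yb)))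
      = (u * Xb - u * Xc) * Ya - (Yb * v - Yc * v) * Ya
        + (Yb * v * Yc - Yc * v * Yb) := by noncomm_ring
  rw [expand, h1, h3, h4]
  simp
end

section
/- In the setting of the previous statement (N=2 K^(1) map), if additionally x²·x¹ = p and y²·y¹ = q where p, q are central elements of D, then u²·u¹ = p and v²·v¹ = q, i.e. under the centrality assumption the products are invariants of the map. -/
lemma swap_central {D : Type*} [DivisionRing D] {a b p : D} (hp : p ∈ Set.center D)
    (h : a * b = p) : b * a = p := by
  rcases eq_or_ne a 0 with rfl | ha
  · simp at h ⊢; simp [← h]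
  · have hb : b = a⁻¹ * p := by rw [← h, ← mul_assoc, inv_mul_cancel₀ ha, one_mul]
    rw [hb, mul_assoc, hp.comm a, ← mul_assoc, inv_mul_cancel₀ ha, one_mul]

lemma key {D : Type*} [DivisionRing D] (a b c d z1 z2 p : D)
    (ha : a ≠ 0) (hb : b ≠ 0) (hc : c ≠ 0) (hd : d ≠ 0)
    (hp : p ∈ Set.center D) (h : z1 * z2 = p) :
    (d⁻¹ * b * z1 * a⁻¹ * c) * (c⁻¹ * a * z2 * b⁻¹ * d) = p := by
  have e : (d⁻¹ * b * z1 * a⁻¹ * c) * (c⁻¹ * a * z2 * b⁻¹ * d)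
      = d⁻¹ * (b * (z1 * (a⁻¹ * ((c * c⁻¹) * (a * (z2 * (b⁻¹ * d))))))) := by
    simp [mul_assoc]
  rw [e, mul_inv_cancel₀ hc, one_mul, ← mul_assoc a⁻¹, inv_mul_cancel₀ ha, one_mul,
    ← mul_assoc z1, h, ← mul_assoc b p, ← hp.comm b, mul_assoc p b, ← mul_assoc b,
    mul_inv_cancel₀ hb, one_mul, ← mul_assoc, ← hp.comm d⁻¹, mul_assoc, inv_mul_cancel₀ hd, mul_one]

theorem stmt_10 {D : Type*} [DivisionRing D] (x1 x2 y1 y2 u1 u2 v1 v2 p q : D)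
    (hp : p ∈ Set.center D) (hq : q ∈ Set.center D)
    (hxp : x2 * x1 = p) (hyq : y2 * y1 = q)
    (hxy1 : x1 ≠ y1) (hxy2 : x2 ≠ y2)
    (h1x1 : 1 - x1 ≠ 0) (h1x2 : 1 - x2 ≠ 0) (h1y1 : 1 - y1 ≠ 0) (h1y2 : 1 - y2 ≠ 0)
    (hu1 : u1 = (1 - y1)⁻¹ * (x1 - y1) * x2 * (x2 - y2)⁻¹ * (1 - y2))
    (hu2 : u2 = (1 - y2)⁻¹ * (x2 - y2) * x1 * (x1 - y1)⁻¹ * (1 - y1))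
    (hv1 : v1 = (1 - x1)⁻¹ * (y1 - x1) * y2 * (y2 - x2)⁻¹ * (1 - x2))
    (hv2 : v2 = (1 - x2)⁻¹ * (y2 - x2) * y1 * (y1 - x1)⁻¹ * (1 - x1)) :
    u2 * u1 = p ∧ v2 * v1 = q := by
  have hxy1' : x1 - y1 ≠ 0 := sub_ne_zero_of_ne hxy1
  have hxy2' : x2 - y2 ≠ 0 := sub_ne_zero_of_ne hxy2
  have hyx1' : y1 - x1 ≠ 0 := sub_ne_zero_of_ne hxy1.symm
  have hyx2' : y2 - x2 ≠ 0 := sub_ne_zero_of_ne hxy2.symm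
  refine ⟨?_, ?_⟩
  · rw [hu1, hu2]
    exact key _ _ _ _ _ _ _ hxy1' hxy2' h1y1 h1y2 hp (swap_central hp hxp)
  · rw [hv1, hv2]
    exact key _ _ _ _ _ _ _ hyx1' hyx2' h1x1 h1x2 hq (swap_central hq hyq)
end
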